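/- For every x in the closed interval Î := [ℓ + (u-ℓ)/4, u - (u-ℓ)/4], the second derivative of Γ satisfies 8/(u-ℓ)² ≤ Γ''(x) ≤ 64/(u-ℓ)², where Γ''(x) = 1/(x-x_L)² + 1/(x_R-x)² + 1/(Δ+x)² + 1/(Δ-x)². -/

import Mathlib

set_option maxHeartbeats 1000000


/-- For `Γ(x) = -log(x-x_L) - log(x_R-x) - log(Δ+x) - log(Δ-x)` with
`ℓ = max(-Δ, x_L)`, `u = min(Δ, x_R)`, `ℓ < u`, on the closed interval
`Î = [ℓ+(u-ℓ)/4, u-(u-ℓ)/4]` the second derivative satisfies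
`8/(u-ℓ)² ≤ Γ''(x) ≤ 64/(u-ℓ)²`, where
`Γ''(x) = 1/(x-x_L)² + 1/(x_R-x)² + 1/(Δ+x)² + 1/(Δ-x)²`. -/
theorem stmt_6 (xL xR Δ : ℝ) (hΔ : 0 < Δ) (ℓ u : ℝ)
    (hℓ : ℓ = max (-Δ) xL) (hu : u = min Δ xR) (hℓu : ℓ < u)
    (Γ : ℝ → ℝ)
    (hΓ : ∀ x, Γ x = -Real.log (x - xL) - Real.log (xR - x)
      - Real.log (Δ + x) - Real.log (Δ - x)) :
    ∀ x ∈ Set.Icc (ℓ + (u - ℓ) / 4) (u - (u - ℓ) / 4),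
      deriv (deriv Γ) x = 1 / (x - xL) ^ 2 + 1 / (xR - x) ^ 2
        + 1 / (Δ + x) ^ 2 + 1 / (Δ - x) ^ 2 ∧
      8 / (u - ℓ) ^ 2 ≤ deriv (deriv Γ) x ∧
      deriv (deriv Γ) x ≤ 64 / (u - ℓ) ^ 2 := by
  have hℓxL : xL ≤ ℓ := hℓ ▸ le_max_right _ _
  have hℓΔ : -Δ ≤ ℓ := hℓ ▸ le_max_left _ _
  have huΔ : u ≤ Δ := hu ▸ min_le_left _ _
  have huxR : u ≤ xR := hu ▸ min_le_right _ _
  set g : ℝ → ℝ := fun y => -(y - xL)⁻¹ + (xR - y)⁻¹ - (Δ + y)⁻¹ + (Δ - y)⁻¹ with hg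
  -- on the open interval, Γ has derivative g
  have key : ∀ y ∈ Set.Ioo ℓ u, HasDerivAt Γ (g y) y := by
    intro y hy
    have h1 : (0:ℝ) < y - xL := by have := hy.1; linarith
    have h2 : (0:ℝ) < xR - y := by have := hy.2; linarith
    have h3 : (0:ℝ) < Δ + y := by have := hy.1; linarith
    have h4 : (0:ℝ) < Δ - y := by have := hy.2; linarith
    have d1 : HasDerivAt (fun y => Real.log (y - xL)) (1 / (y - xL)) y :=
      ((hasDerivAt_id y).sub_const xL).log h1.ne'
    have d2 : HasDerivAt (fun y => Real.log (xR - y)) (-1 / (xR - y)) y :=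
      ((hasDerivAt_const y xR).sub (hasDerivAt_id y)).log h2.ne' |>.congr_deriv (by simp only [Pi.sub_apply, Pi.add_apply, id_eq]; try ring)
    have d3 : HasDerivAt (fun y => Real.log (Δ + y)) (1 / (Δ + y)) y :=
      ((hasDerivAt_const y Δ).add (hasDerivAt_id y)).log h3.ne' |>.congr_deriv (by simp only [Pi.sub_apply, Pi.add_apply, id_eq]; try ring)
    have d4 : HasDerivAt (fun y => Real.log (Δ - y)) (-1 / (Δ - y)) y :=
      ((hasDerivAt_const y Δ).sub (hasDerivAt_id y)).log h4.ne' |>.congr_deriv (by simp only [Pi.sub_apply, Pi.add_apply, id_eq]; try ring)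
    have := ((d1.neg.sub d2).sub d3).sub d4
    refine (this.congr_of_eventuallyEq ?_).congr_deriv ?_
    · filter_upwards with z using hΓ z
    · simp only [hg, one_div]; ring
  intro x hx
  have hw : (0:ℝ) < u - ℓ := by linarith
  have hxIoo : x ∈ Set.Ioo ℓ u := ⟨by have := hx.1; linarith, by have := hx.2; linarith⟩
  have hIoo : Set.Ioo ℓ u ∈ nhds x := (isOpen_Ioo).mem_nhds hxIoo
  have heq : deriv Γ =ᶠ[nhds x] g := by
    filter_upwards [hIoo] with y hy using (key y hy).deriv
  have h1 : (0:ℝ) < x - xL := by have := hxIoo.1; linarith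
  have h2 : (0:ℝ) < xR - x := by have := hxIoo.2; linarith
  have h3 : (0:ℝ) < Δ + x := by have := hxIoo.1; linarith
  have h4 : (0:ℝ) < Δ - x := by have := hxIoo.2; linarith
  have hgd : HasDerivAt g (1 / (x - xL) ^ 2 + 1 / (xR - x) ^ 2
      + 1 / (Δ + x) ^ 2 + 1 / (Δ - x) ^ 2) x := by
    have e1 : HasDerivAt (fun y : ℝ => (y - xL)⁻¹) (-1 / (x - xL) ^ 2) x :=
      ((hasDerivAt_id x).sub_const xL).inv h1.ne' |>.congr_deriv (by simp only [id_eq]; try ring)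
    have e2 : HasDerivAt (fun y : ℝ => (xR - y)⁻¹) (1 / (xR - x) ^ 2) x :=
      ((hasDerivAt_const x xR).sub (hasDerivAt_id x)).inv h2.ne' |>.congr_deriv (by simp only [Pi.sub_apply, Pi.add_apply, id_eq]; try ring)
    have e3 : HasDerivAt (fun y : ℝ => (Δ + y)⁻¹) (-1 / (Δ + x) ^ 2) x :=
      ((hasDerivAt_const x Δ).add (hasDerivAt_id x)).inv h3.ne' |>.congr_deriv (by simp only [Pi.sub_apply, Pi.add_apply, id_eq]; try ring)
    have e4 : HasDerivAt (fun y : ℝ => (Δ - y)⁻¹) (1 / (Δ - x) ^ 2) x :=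
      ((hasDerivAt_const x Δ).sub (hasDerivAt_id x)).inv h4.ne' |>.congr_deriv (by simp only [Pi.sub_apply, Pi.add_apply, id_eq]; try ring)
    have := ((e1.neg.add e2).sub e3).add e4
    exact this.congr_deriv (by ring)
  have hmain : deriv (deriv Γ) x = 1 / (x - xL) ^ 2 + 1 / (xR - x) ^ 2
      + 1 / (Δ + x) ^ 2 + 1 / (Δ - x) ^ 2 := by
    rw [heq.deriv_eq, hgd.deriv]
  refine ⟨hmain, ?_, ?_⟩
  · -- lower bound
    rw [hmain]
    set s := x - ℓ with hs
    set t := u - x with ht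
    have hs1 : (u - ℓ) / 4 ≤ s := by have := hx.1; simp [hs]; linarith
    have ht1 : (u - ℓ) / 4 ≤ t := by have := hx.2; simp [ht]; linarith
    have hs0 : 0 < s := by linarith
    have ht0 : 0 < t := by linarith
    have hst : s + t = u - ℓ := by simp only [hs, ht]; ring
    have hlow : 8 / (u - ℓ) ^ 2 ≤ 1 / s ^ 2 + 1 / t ^ 2 := by
      rw [div_add_div _ _ (by positivity) (by positivity), div_le_div_iff₀ (by positivity) (by positivity), ← hst]
      nlinarith [mul_nonneg (sq_nonneg (s - t)) (by positivity : (0:ℝ) ≤ s^2 + 4*s*t + t^2)]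
    have hA : 1 / s ^ 2 ≤ 1 / (x - xL) ^ 2 + 1 / (Δ + x) ^ 2 := by
      rcases max_cases (-Δ) xL with ⟨h, _⟩ | ⟨h, _⟩
      · have : s = Δ + x := by rw [hs, hℓ, h]; try ring
        rw [this]; have : (0:ℝ) ≤ 1 / (x - xL) ^ 2 := by positivity
        linarith
      · have : s = x - xL := by rw [hs, hℓ, h]
        rw [this]; have : (0:ℝ) ≤ 1 / (Δ + x) ^ 2 := by positivity
        linarith
    have hB : 1 / t ^ 2 ≤ 1 / (xR - x) ^ 2 + 1 / (Δ - x) ^ 2 := by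
      rcases min_cases Δ xR with ⟨h, _⟩ | ⟨h, _⟩
      · have : t = Δ - x := by rw [ht, hu, h]
        rw [this]; have : (0:ℝ) ≤ 1 / (xR - x) ^ 2 := by positivity
        linarith
      · have : t = xR - x := by rw [ht, hu, h]; try ring
        rw [this]; have : (0:ℝ) ≤ 1 / (Δ - x) ^ 2 := by positivity
        linarith
    linarith
  · -- upper bound
    rw [hmain]
    have q : ∀ a : ℝ, (u - ℓ) / 4 ≤ a → 1 / a ^ 2 ≤ 16 / (u - ℓ) ^ 2 := by
      intro a ha
      have ha0 : 0 < a := lt_of_lt_of_le (by linarith) ha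
      rw [div_le_div_iff₀ (by positivity) (by positivity)]
      nlinarith [mul_le_mul ha ha (by linarith) ha0.le]
    have qa := q (x - xL) (by have := hx.1; linarith)
    have qb := q (xR - x) (by have := hx.2; linarith)
    have qc := q (Δ + x) (by have := hx.1; linarith)
    have qd := q (Δ - x) (by have := hx.2; linarith)
    have h64 : (64:ℝ) / (u - ℓ) ^ 2 = 16 / (u - ℓ) ^ 2 + 16 / (u - ℓ) ^ 2 + 16 / (u - ℓ) ^ 2 + 16 / (u - ℓ) ^ 2 := by ring
    linarith
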